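/- Let P ⊆ ℝ² and x₀ ∈ ℝ be such that every point of P has first coordinate at least x₀, for every t ∈ ℝ the horizontal slice {x : (x, t) ∈ P} is a convex subset of ℝ, and for every point q ∈ P the point (x₀, q.2) (the point at abscissa x₀ with the same second coordinate as q) belongs to P. Let q, r ∈ P be points such that the segment from q to r is contained in P. Then the segment from (x₀, q.2) to r is also contained in P. -/

import Mathlib

/-- In a set `P ⊆ ℝ²` bounded to the left by abscissa `x₀`, with convex
horizontal slices, and closed under projecting points horizontally to
abscissa `x₀`: if `q ∈ P` sees `r ∈ P` within `P`, then the projected point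
`(x₀, q.2)` also sees `r` within `P`. -/
theorem projected_point_sees_of_sees
    (P : Set (ℝ × ℝ)) (x₀ : ℝ)
    (hleft : ∀ p ∈ P, x₀ ≤ p.1)
    (hslice : ∀ t : ℝ, Convex ℝ {x : ℝ | (x, t) ∈ P})
    (hproj : ∀ q ∈ P, (x₀, q.2) ∈ P)
    (q r : ℝ × ℝ) (hq : q ∈ P) (hr : r ∈ P)
    (hseg : segment ℝ q r ⊆ P) :
    segment ℝ (x₀, q.2) r ⊆ P := by
  rintro z ⟨a, b, ha, hb, hab, rfl⟩
  have hm : a • q + b • r ∈ P := hseg ⟨a, b, ha, hb, hab, rfl⟩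
  have ht : (a • q + b • r).2 = a * q.2 + b * r.2 := rfl
  have hx₀ : (x₀, a * q.2 + b * r.2) ∈ P := by
    have := hproj _ hm
    rwa [ht] at this
  have hm1 : (a • q + b • r).1 ∈ {x : ℝ | (x, a * q.2 + b * r.2) ∈ P} := by
    exact hm
  have hlo : x₀ ≤ a * x₀ + b * r.1 := by
    have h1 : a * x₀ + b * x₀ = x₀ := by rw [← add_mul, hab, one_mul]
    have h2 : b * x₀ ≤ b * r.1 := mul_le_mul_of_nonneg_left (hleft r hr) hb
    linarith
  have hhi : a * x₀ + b * r.1 ≤ (a • q + b • r).1 := by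
    have h2 : a * x₀ ≤ a * q.1 := mul_le_mul_of_nonneg_left (hleft q hq) ha
    have : (a • q + b • r).1 = a * q.1 + b * r.1 := rfl
    rw [this]; linarith
  have := (hslice (a * q.2 + b * r.2)).ordConnected.out hx₀ hm1 ⟨hlo, hhi⟩
  simpa [Prod.ext_iff, Prod.smul_def] using this
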